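/- lim_{q→1⁻} (1-q) · (q²;q²)_∞² / (q;q²)_∞² = π/2, where the limit is over real q approaching 1 from below. -/

import Mathlib

open scoped BigOperators

/-- The infinite q-Pochhammer symbol over the reals. -/
noncomputable def qPochInfR (a q : ℝ) : ℝ := ∏' k : ℕ, (1 - a * q ^ k)

open Real Filter Finset

namespace QLimitAux

/-- Geometric partial sum. -/
noncomputable def sg (n : ℕ) (q : ℝ) : ℝ := ∑ j ∈ Finset.range n, q ^ j

lemma sg_pos {q : ℝ} (hq : 0 < q) {n : ℕ} (hn : 0 < n) : 0 < sg n q :=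
  Finset.sum_pos (fun i _ => pow_pos hq i)
    (by simpa [Finset.nonempty_range_iff] using hn.ne')

lemma sg_succ (n : ℕ) (q : ℝ) : sg (n + 1) q = q * sg n q + 1 := by
  simpa [sg] using geom_sum_succ (x := q) (n := n)

lemma sg_succ' (n : ℕ) (q : ℝ) : sg (n + 1) q = q ^ n + sg n q := by
  simpa [sg] using geom_sum_succ' (x := q) (n := n)

lemma one_sub_mul_sg (n : ℕ) (q : ℝ) : (1 - q) * sg n q = 1 - q ^ n := by
  have := geom_sum_mul q n
  simp only [sg]
  nlinarith [this]

lemma sg_one (n : ℕ) : sg n 1 = n := by simp [sg]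

/-- Key algebraic identity `s_{n+1}^2 - s_n s_{n+2} = q^n`. -/
lemma sg_key (n : ℕ) (q : ℝ) :
    sg (n + 1) q ^ 2 - sg n q * sg (n + 2) q = q ^ n := by
  have h1 := sg_succ n q
  have h2 : sg (n + 2) q = q * sg (n + 1) q + 1 := by
    rw [show n + 2 = (n + 1) + 1 by omega]; exact sg_succ (n + 1) q
  have h3 := sg_succ' n q
  linear_combination sg (n + 1) q * h1 - sg n q * h2 + h3

/-- The Wallis-type factor. -/
noncomputable def fq (k : ℕ) (q : ℝ) : ℝ :=
  sg (2 * k + 2) q ^ 2 / (sg (2 * k + 1) q * sg (2 * k + 3) q)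

lemma fq_pos {q : ℝ} (hq : 0 < q) (k : ℕ) : 0 < fq k q := by
  have h1 : 0 < sg (2 * k + 1) q := sg_pos hq (by omega)
  have h2 : 0 < sg (2 * k + 2) q := sg_pos hq (by omega)
  have h3 : 0 < sg (2 * k + 3) q := sg_pos hq (by omega)
  exact div_pos (by positivity) (by positivity)

lemma fq_eq {q : ℝ} (hq : 0 < q) (k : ℕ) :
    fq k q = 1 + q ^ (2 * k + 1) / (sg (2 * k + 1) q * sg (2 * k + 3) q) := by
  have h1 : 0 < sg (2 * k + 1) q := sg_pos hq (by omega)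
  have h3 : 0 < sg (2 * k + 3) q := sg_pos hq (by omega)
  have hkey : sg (2 * k + 2) q ^ 2 - sg (2 * k + 1) q * sg (2 * k + 3) q
      = q ^ (2 * k + 1) := by
    have := sg_key (2 * k + 1) q
    convert this using 3 <;> omega
  rw [fq]
  field_simp
  linear_combination hkey

lemma one_le_fq {q : ℝ} (hq : 0 < q) (k : ℕ) : 1 ≤ fq k q := by
  have h1 : 0 < sg (2 * k + 1) q := sg_pos hq (by omega)
  have h3 : 0 < sg (2 * k + 3) q := sg_pos hq (by omega)
  rw [fq_eq hq k]
  have : 0 ≤ q ^ (2 * k + 1) / (sg (2 * k + 1) q * sg (2 * k + 3) q) := by positivity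
  linarith

/-- Lower bound for geometric partial sums. -/
lemma sg_ge {q : ℝ} (hq0 : 0 < q) (hq1 : q ≤ 1) {m n : ℕ} (h : m ≤ n) :
    (m : ℝ) * q ^ m ≤ sg n q := by
  calc (m : ℝ) * q ^ m = ∑ _j ∈ Finset.range m, q ^ m := by
        simp [mul_comm]
    _ ≤ ∑ j ∈ Finset.range m, q ^ j := by
        refine Finset.sum_le_sum fun j hj => ?_
        exact pow_le_pow_of_le_one hq0.le hq1 (by
          have := Finset.mem_range.mp hj; omega)
    _ ≤ sg n q := by
        refine Finset.sum_le_sum_of_subset_of_nonneg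
          (Finset.range_subset_range.mpr h) fun j _ _ => by positivity

lemma fq_le {q : ℝ} (hq0 : 1 / 2 ≤ q) (hq1 : q ≤ 1) (k : ℕ) :
    fq k q ≤ 1 + 2 / ((k : ℝ) + 1) ^ 2 := by
  have hq0' : 0 < q := by linarith
  have h1 : 0 < sg (2 * k + 1) q := sg_pos hq0' (by omega)
  have h3 : 0 < sg (2 * k + 3) q := sg_pos hq0' (by omega)
  rw [fq_eq hq0' k]
  have hb1 : ((k : ℝ) + 1) * q ^ (k + 1) ≤ sg (2 * k + 1) q := by
    have := sg_ge hq0' hq1 (m := k + 1) (n := 2 * k + 1) (by omega)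
    push_cast at this ⊢; linarith
  have hb3 : ((k : ℝ) + 1) * q ^ (k + 1) ≤ sg (2 * k + 3) q := by
    have := sg_ge hq0' hq1 (m := k + 1) (n := 2 * k + 3) (by omega)
    push_cast at this ⊢; linarith
  have hk1 : (0 : ℝ) < (k : ℝ) + 1 := by positivity
  have hpow : (0 : ℝ) < q ^ (k + 1) := by positivity
  have hprod : ((k : ℝ) + 1) ^ 2 * q ^ (2 * k + 2)
      ≤ sg (2 * k + 1) q * sg (2 * k + 3) q := by
    have := mul_le_mul hb1 hb3 (by positivity) h1.le
    calc ((k : ℝ) + 1) ^ 2 * q ^ (2 * k + 2)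
        = (((k : ℝ) + 1) * q ^ (k + 1)) * (((k : ℝ) + 1) * q ^ (k + 1)) := by
          rw [show 2 * k + 2 = (k + 1) + (k + 1) by omega, pow_add]; ring
      _ ≤ _ := this
  have key : q ^ (2 * k + 1) / (sg (2 * k + 1) q * sg (2 * k + 3) q)
      ≤ 2 / ((k : ℝ) + 1) ^ 2 := by
    rw [div_le_div_iff₀ (by positivity) (by positivity)]
    have h2 : q ^ (2 * k + 2) = q ^ (2 * k + 1) * q := by
      rw [show 2 * k + 2 = (2 * k + 1) + 1 by omega, pow_succ]
    have hq' : q ^ (2 * k + 1) * q ≥ q ^ (2 * k + 1) * (1 / 2) := by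
      have : (0:ℝ) < q ^ (2 * k + 1) := by positivity
      nlinarith
    nlinarith [hprod, pow_pos hq0' (2 * k + 1), sq_nonneg ((k:ℝ)+1)]
  linarith

lemma log_fq_bound {q : ℝ} (hq0 : 1 / 2 ≤ q) (hq1 : q ≤ 1) (k : ℕ) :
    ‖Real.log (fq k q)‖ ≤ 2 / ((k : ℝ) + 1) ^ 2 := by
  have hq0' : 0 < q := by linarith
  have h1 : 1 ≤ fq k q := one_le_fq hq0' k
  rw [Real.norm_eq_abs, abs_of_nonneg (Real.log_nonneg h1)]
  calc Real.log (fq k q) ≤ fq k q - 1 :=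
        Real.log_le_sub_one_of_pos (by linarith)
    _ ≤ 2 / ((k : ℝ) + 1) ^ 2 := by linarith [fq_le hq0 hq1 k]

lemma summable_M : Summable (fun k : ℕ => 2 / ((k : ℝ) + 1) ^ 2) := by
  have h : Summable (fun n : ℕ => 1 / (n : ℝ) ^ 2) :=
    summable_one_div_nat_pow.mpr one_lt_two
  have h1 : Summable (fun k : ℕ => 1 / ((k : ℝ) + 1) ^ 2) := by
    have := (summable_nat_add_iff 1).mpr h
    simpa [Nat.cast_add] using this
  simpa [div_eq_mul_inv, mul_comm] using h1.mul_left 2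

lemma continuousOn_sg (n : ℕ) : Continuous fun q : ℝ => sg n q := by
  unfold sg; exact continuous_finset_sum _ fun i _ => continuous_pow i

noncomputable def G (q : ℝ) : ℝ := ∑' k : ℕ, Real.log (fq k q)

def S : Set ℝ := Set.Icc (1 / 2) 1

lemma mem_S_pos {q : ℝ} (hq : q ∈ S) : 0 < q := by
  have := hq.1; simp only [S] at *; linarith

lemma summable_log_fq {q : ℝ} (hq : q ∈ S) :
    Summable fun k : ℕ => Real.log (fq k q) :=
  Summable.of_norm_bounded summable_M (fun k => log_fq_bound hq.1 hq.2 k)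

lemma hasProd_fq {q : ℝ} (hq : q ∈ S) :
    HasProd (fun k : ℕ => fq k q) (Real.exp (G q)) := by
  have h := (summable_log_fq hq).hasSum.rexp
  have he : (rexp ∘ fun k : ℕ => Real.log (fq k q)) = fun k : ℕ => fq k q :=
    funext fun k => Real.exp_log (fq_pos (mem_S_pos hq) k)
  rwa [he] at h

lemma continuousOn_G : ContinuousOn G S := by
  have hunif : TendstoUniformlyOn
      (fun (t : Finset ℕ) q => ∑ k ∈ t, Real.log (fq k q)) G atTop S :=
    tendstoUniformlyOn_tsum summable_M (fun k q hq => log_fq_bound hq.1 hq.2 k)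
  refine hunif.continuousOn (Filter.Eventually.of_forall fun t => ?_).frequently
  refine continuousOn_finset_sum _ fun k _ => ?_
  have hc : ContinuousOn (fun q : ℝ => fq k q) S := by
    apply ContinuousOn.div ((continuousOn_sg (2 * k + 2)).pow 2).continuousOn
      (((continuousOn_sg (2 * k + 1)).mul (continuousOn_sg (2 * k + 3))).continuousOn)
    intro q hq
    have hq' := mem_S_pos hq
    have h1 : 0 < sg (2 * k + 1) q := sg_pos hq' (by omega)
    have h3 : 0 < sg (2 * k + 3) q := sg_pos hq' (by omega)
    exact (mul_pos h1 h3).ne'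
  exact hc.log fun q hq => (fq_pos (mem_S_pos hq) k).ne'

lemma fq_one (k : ℕ) :
    fq k 1 = (2 * (k : ℝ) + 2) / (2 * k + 1) * ((2 * k + 2) / (2 * k + 3)) := by
  have h1 : ((2 * k + 1 : ℕ) : ℝ) = 2 * (k : ℝ) + 1 := by push_cast; ring
  have h2 : ((2 * k + 2 : ℕ) : ℝ) = 2 * (k : ℝ) + 2 := by push_cast; ring
  have h3 : ((2 * k + 3 : ℕ) : ℝ) = 2 * (k : ℝ) + 3 := by push_cast; ring
  rw [fq, sg_one, sg_one, sg_one, h1, h2, h3]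
  have d1 : (2 * (k : ℝ) + 1) ≠ 0 := by positivity
  have d3 : (2 * (k : ℝ) + 3) ≠ 0 := by positivity
  field_simp

lemma exp_G_one : Real.exp (G 1) = Real.pi / 2 := by
  have h1 : (1 : ℝ) ∈ S := by constructor <;> norm_num
  have h2 := (hasProd_fq h1).tendsto_prod_nat
  have h3 := Real.tendsto_prod_pi_div_two
  have h4 : (fun n : ℕ => ∏ i ∈ Finset.range n, fq i 1)
      = fun n : ℕ => ∏ i ∈ Finset.range n,
          ((2 : ℝ) * i + 2) / (2 * i + 1) * ((2 * i + 2) / (2 * i + 3)) := by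
    funext n; exact Finset.prod_congr rfl fun i _ => fq_one i
  rw [h4] at h2
  exact tendsto_nhds_unique h2 h3

/-! ### The product identity for `q ∈ (0,1)` -/

section Identity

variable {q : ℝ} (hq0 : 0 < q) (hq1 : q < 1)

include hq0 hq1

lemma one_sub_pow_pos {n : ℕ} (hn : 0 < n) : 0 < 1 - q ^ n :=
  sub_pos.mpr (pow_lt_one₀ hq0.le hq1 hn.ne')

lemma summable_log_one_sub (e : ℕ → ℕ) (he : ∀ k, 2 * k + 1 ≤ e k) :
    Summable fun k : ℕ => Real.log (1 - q ^ e k) := by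
  have hq2 : q ^ 2 < 1 := by nlinarith
  have hmaj : Summable fun k : ℕ => (q ^ 2) ^ k * (q / (1 - q)) :=
    (summable_geometric_of_lt_one (by positivity) hq2).mul_right _
  refine Summable.of_norm_bounded hmaj fun k => ?_
  have hek : 0 < e k := by have := he k; omega
  have hx1 : q ^ e k ≤ q ^ (2 * k + 1) :=
    pow_le_pow_of_le_one hq0.le hq1.le (he k)
  have hxpos : 0 < q ^ e k := pow_pos hq0 _
  have hlt : q ^ e k < 1 := pow_lt_one₀ hq0.le hq1 hek.ne'
  have hpos : 0 < 1 - q ^ e k := by linarith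
  have hle : 1 - q ^ e k ≥ 1 - q := by
    have : q ^ e k ≤ q := by
      calc q ^ e k ≤ q ^ 1 := pow_le_pow_of_le_one hq0.le hq1.le (by omega)
        _ = q := pow_one q
    linarith
  have hlog : Real.log (1 - q ^ e k) ≤ 0 :=
    Real.log_nonpos (by linarith) (by linarith)
  rw [Real.norm_eq_abs, abs_of_nonpos hlog]
  have h1 : -Real.log (1 - q ^ e k) = Real.log (1 - q ^ e k)⁻¹ := by
    rw [Real.log_inv]
  rw [h1]
  have h2 : Real.log (1 - q ^ e k)⁻¹ ≤ (1 - q ^ e k)⁻¹ - 1 :=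
    Real.log_le_sub_one_of_pos (by positivity)
  have h3 : (1 - q ^ e k)⁻¹ - 1 = q ^ e k / (1 - q ^ e k) := by
    field_simp
    ring
  have h4 : q ^ e k / (1 - q ^ e k) ≤ q ^ (2 * k + 1) / (1 - q) := by
    apply div_le_div₀ (by positivity) hx1 (by linarith) hle
  have h5 : q ^ (2 * k + 1) / (1 - q) = (q ^ 2) ^ k * (q / (1 - q)) := by
    rw [← pow_mul]
    rw [show 2 * k + 1 = 2 * k + 1 from rfl, pow_add, pow_one]
    field_simp
  linarith [h2, h4, h5.le, h5.ge]

lemma hasProd_one_sub (e : ℕ → ℕ) (he : ∀ k, 2 * k + 1 ≤ e k) :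
    HasProd (fun k : ℕ => 1 - q ^ e k)
      (Real.exp (∑' k : ℕ, Real.log (1 - q ^ e k))) := by
  have h := (summable_log_one_sub hq0 hq1 e he).hasSum.rexp
  have hpos : ∀ k : ℕ, 0 < 1 - q ^ e k := fun k =>
    one_sub_pow_pos hq0 hq1 (by have := he k; omega)
  have he2 : (rexp ∘ fun k : ℕ => Real.log (1 - q ^ e k))
      = fun k : ℕ => 1 - q ^ e k :=
    funext fun k => Real.exp_log (hpos k)
  rwa [he2] at h

lemma fq_eq_ratio (k : ℕ) :
    fq k q = (1 - q ^ (2 * k + 2)) ^ 2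
      / ((1 - q ^ (2 * k + 1)) * (1 - q ^ (2 * k + 3))) := by
  have e1 := one_sub_mul_sg (2 * k + 1) q
  have e2 := one_sub_mul_sg (2 * k + 2) q
  have e3 := one_sub_mul_sg (2 * k + 3) q
  have h1 : 0 < sg (2 * k + 1) q := sg_pos hq0 (by omega)
  have h2 : 0 < sg (2 * k + 2) q := sg_pos hq0 (by omega)
  have h3 : 0 < sg (2 * k + 3) q := sg_pos hq0 (by omega)
  have hq' : (0:ℝ) < 1 - q := by linarith
  rw [fq, ← e1, ← e2, ← e3]
  rw [mul_pow]
  rw [show (1 - q) * sg (2 * k + 1) q * ((1 - q) * sg (2 * k + 3) q)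
      = (1 - q) ^ 2 * (sg (2 * k + 1) q * sg (2 * k + 3) q) by ring]
  rw [mul_div_mul_left _ _ (by positivity)]

lemma log_fq_eq (k : ℕ) :
    Real.log (fq k q) = 2 * Real.log (1 - q ^ (2 * k + 2))
      - Real.log (1 - q ^ (2 * k + 1)) - Real.log (1 - q ^ (2 * k + 3)) := by
  have p1 : 0 < 1 - q ^ (2 * k + 1) := one_sub_pow_pos hq0 hq1 (by omega)
  have p2 : 0 < 1 - q ^ (2 * k + 2) := one_sub_pow_pos hq0 hq1 (by omega)
  have p3 : 0 < 1 - q ^ (2 * k + 3) := one_sub_pow_pos hq0 hq1 (by omega)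
  rw [fq_eq_ratio hq0 hq1 k, Real.log_div (by positivity) (by positivity),
    Real.log_mul p1.ne' p3.ne', Real.log_pow]
  push_cast
  ring

lemma G_eq :
    G q = 2 * (∑' k : ℕ, Real.log (1 - q ^ (2 * k + 2)))
      - 2 * (∑' k : ℕ, Real.log (1 - q ^ (2 * k + 1))) + Real.log (1 - q) := by
  have ha : Summable fun k : ℕ => Real.log (1 - q ^ (2 * k + 2)) :=
    summable_log_one_sub hq0 hq1 _ (fun k => by omega)
  have hb : Summable fun k : ℕ => Real.log (1 - q ^ (2 * k + 1)) :=
    summable_log_one_sub hq0 hq1 _ (fun k => by omega)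
  have hc : Summable fun k : ℕ => Real.log (1 - q ^ (2 * k + 3)) :=
    summable_log_one_sub hq0 hq1 _ (fun k => by omega)
  have hshift : (∑' k : ℕ, Real.log (1 - q ^ (2 * k + 3)))
      = (∑' k : ℕ, Real.log (1 - q ^ (2 * k + 1))) - Real.log (1 - q) := by
    have h0 := Summable.tsum_eq_zero_add (f := fun k : ℕ => Real.log (1 - q ^ (2 * k + 1))) hb
    have hc' : (∑' k : ℕ, Real.log (1 - q ^ (2 * k + 3)))
        = ∑' k : ℕ, Real.log (1 - q ^ (2 * (k + 1) + 1)) :=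
      tsum_congr fun k => by rw [show 2 * (k + 1) + 1 = 2 * k + 3 by omega]
    have hB0 : Real.log (1 - q ^ (2 * 0 + 1)) = Real.log (1 - q) := by norm_num
    beta_reduce at h0
    rw [hc']
    rw [hB0] at h0
    linarith [h0]
  calc G q = ∑' k : ℕ, (2 * Real.log (1 - q ^ (2 * k + 2))
        - Real.log (1 - q ^ (2 * k + 1)) - Real.log (1 - q ^ (2 * k + 3))) :=
        tsum_congr fun k => log_fq_eq hq0 hq1 k
    _ = (∑' k : ℕ, (2 * Real.log (1 - q ^ (2 * k + 2))
          - Real.log (1 - q ^ (2 * k + 1))))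
        - ∑' k : ℕ, Real.log (1 - q ^ (2 * k + 3)) :=
        Summable.tsum_sub ((ha.mul_left 2).sub hb) hc
    _ = 2 * (∑' k : ℕ, Real.log (1 - q ^ (2 * k + 2)))
        - (∑' k : ℕ, Real.log (1 - q ^ (2 * k + 1)))
        - ∑' k : ℕ, Real.log (1 - q ^ (2 * k + 3)) := by
        rw [Summable.tsum_sub (ha.mul_left 2) hb, tsum_mul_left]
    _ = _ := by rw [hshift]; ring

lemma identity :
    (1 - q) * qPochInfR (q ^ 2) (q ^ 2) ^ 2 / qPochInfR q (q ^ 2) ^ 2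
      = Real.exp (G q) := by
  have hA : qPochInfR (q ^ 2) (q ^ 2)
      = Real.exp (∑' k : ℕ, Real.log (1 - q ^ (2 * k + 2))) := by
    have h := hasProd_one_sub hq0 hq1 (fun k => 2 * k + 2) (fun k => Nat.le_succ _)
    have hcongr : (fun k : ℕ => 1 - q ^ (2 * k + 2))
        = fun k : ℕ => 1 - q ^ 2 * (q ^ 2) ^ k := by
      funext k
      have : q ^ 2 * (q ^ 2) ^ k = q ^ (2 * k + 2) := by
        rw [← pow_mul, ← pow_add]; congr 1; omega
      rw [this]
    rw [hcongr] at h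
    rw [qPochInfR]
    exact h.tprod_eq
  have hB : qPochInfR q (q ^ 2)
      = Real.exp (∑' k : ℕ, Real.log (1 - q ^ (2 * k + 1))) := by
    have h := hasProd_one_sub hq0 hq1 (fun k => 2 * k + 1) (fun k => Nat.le.refl)
    have hcongr : (fun k : ℕ => 1 - q ^ (2 * k + 1))
        = fun k : ℕ => 1 - q * (q ^ 2) ^ k := by
      funext k
      have : q * (q ^ 2) ^ k = q ^ (2 * k + 1) := by
        rw [← pow_mul, ← pow_succ']
      rw [this]
    rw [hcongr] at h
    rw [qPochInfR]
    exact h.tprod_eq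
  set La := ∑' k : ℕ, Real.log (1 - q ^ (2 * k + 2))
  set Lb := ∑' k : ℕ, Real.log (1 - q ^ (2 * k + 1))
  rw [hA, hB, G_eq hq0 hq1]
  have hq' : (0:ℝ) < 1 - q := by linarith
  rw [show 2 * La - 2 * Lb + Real.log (1 - q)
      = (La + La) - (Lb + Lb) + Real.log (1 - q) by ring,
    Real.exp_add, Real.exp_sub, Real.exp_add, Real.exp_add, Real.exp_log hq']
  field_simp [Real.exp_ne_zero]

end Identity

end QLimitAux

open QLimitAux in
theorem limit_q_to_one :
    Filter.Tendsto
      (fun q : ℝ => (1 - q) * qPochInfR (q ^ 2) (q ^ 2) ^ 2 / qPochInfR q (q ^ 2) ^ 2)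
      (nhdsWithin 1 (Set.Iio 1)) (nhds (Real.pi / 2)) := by
  have hmemS : (1 : ℝ) ∈ S := by constructor <;> norm_num
  have hIoo : Set.Ioo (1/2 : ℝ) 1 ∈ nhdsWithin (1:ℝ) (Set.Iio 1) :=
    Ioo_mem_nhdsLT_of_mem (by constructor <;> norm_num)
  -- Tendsto of exp ∘ G along 𝓝[Iio 1] 1
  have hle : nhdsWithin (1:ℝ) (Set.Iio 1) ≤ nhdsWithin (1:ℝ) S := by
    apply nhdsWithin_le_of_mem
    exact Filter.mem_of_superset hIoo fun x hx => ⟨hx.1.le, hx.2.le⟩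
  have hG : Filter.Tendsto G (nhdsWithin (1:ℝ) S) (nhds (G 1)) :=
    (continuousOn_G 1 hmemS).tendsto
  have hexp : Filter.Tendsto (fun q => Real.exp (G q))
      (nhdsWithin (1:ℝ) (Set.Iio 1)) (nhds (Real.pi / 2)) := by
    rw [← exp_G_one]
    exact (hG.mono_left hle).rexp
  refine hexp.congr' ?_
  filter_upwards [hIoo] with q hq
  exact (identity (by linarith [hq.1]) hq.2).symm
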